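/- Let U be an optimal prefix-free machine and K = K_U. Let ℓ, m : ℕ → ℕ be computable and strictly increasing with ℓ(0) = m(0) = 0 and ℓ(n+1) − ℓ(n) ≥ m(n+1) − m(n) for all n. Define H_λ = {λ} (λ the empty string) and, recursively, for every σ of length m(n) and ρ of length m(n+1) − m(n), H_{σ∗ρ} = {τ' of length ℓ(n+1) : τ∗ρ is a prefix of τ' for some τ ∈ H_σ}. For a tree T, let Φ(T) be the downward closure of ⋃_n {σ of length m(n) : T ∩ H_σ ≠ ∅}. Then for every T ∈ 𝒯_ℓ (the pruned trees in which every node of length ℓ(n) has one or two extensions of length ℓ(n+1)), Φ(T) is an infinite pruned tree; moreover, there is a constant d, independent of T and c, such that for every c: if K(σ) ≥ |σ| − c for every σ ∈ T, then K(σ) ≥ |σ| − c − d for every σ ∈ Φ(T). In particular, if T is path-incompressible then Φ(T) is path-incompressible. -/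

import Mathlib

open scoped ENNReal

/-- The length-`n` prefix of a point of Cantor space `2^ω = ℕ → Bool`, as a binary string. -/
def pre (x : ℕ → Bool) (n : ℕ) : List Bool := (List.range n).map x

/-- `σ` is a (finite) prefix of `x ∈ 2^ω`. -/
def PrefOf (σ : List Bool) (x : ℕ → Bool) : Prop := pre x σ.length = σ

/-- The cylinder `[σ] = {x ∈ 2^ω : σ ⪯ x}`. -/
def cyl (σ : List Bool) : Set (ℕ → Bool) := {x | PrefOf σ x}

/-- `[V] = ⋃_{σ ∈ V} [σ]`. -/
def cylSet (V : Set (List Bool)) : Set (ℕ → Bool) := ⋃ σ ∈ V, cyl σ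

/-- A tree: a set of binary strings closed under prefixes. -/
def IsTree (T : Set (List Bool)) : Prop := ∀ σ ∈ T, ∀ τ : List Bool, τ <+: σ → τ ∈ T

/-- A pruned tree: every node has a proper extension in the tree. -/
def Pruned (T : Set (List Bool)) : Prop := ∀ σ ∈ T, ∃ τ ∈ T, σ <+: τ ∧ σ ≠ τ

/-- The set `[T]` of paths of a tree `T`. -/
def paths (T : Set (List Bool)) : Set (ℕ → Bool) := {x | ∀ n, pre x n ∈ T}

/-- The fair-coin (uniform) product measure on Cantor space, characterized by its
values `μ [σ] = 2^{-|σ|}` on cylinders (this determines `μ` uniquely). -/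
def IsFairCoin (μ : MeasureTheory.Measure (ℕ → Bool)) : Prop :=
  ∀ σ : List Bool, μ (cyl σ) = 2⁻¹ ^ σ.length

/-- A set of strings is prefix-free: no element is a proper prefix of another. -/
def PrefixFreeSet (D : Set (List Bool)) : Prop :=
  ∀ ρ₁ ∈ D, ∀ ρ₂ ∈ D, ρ₁ <+: ρ₂ → ρ₁ = ρ₂

/-- A prefix-free machine: a partial computable function on binary strings whose
domain is prefix-free. -/
structure PrefixFreeMachine where
  M : List Bool →. List Bool
  partrec : Partrec M
  prefixFree : PrefixFreeSet M.Dom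

/-- `K_M(σ)`: the least length of a string `ρ` with `M(ρ) = σ` (`⊤` if there is none). -/
noncomputable def Kof (W : PrefixFreeMachine) (σ : List Bool) : ℕ∞ :=
  ⨅ (ρ : List Bool) (_ : σ ∈ W.M ρ), (ρ.length : ℕ∞)

/-- A prefix-free machine `U` is optimal if `K_U ≤ K_M + c` for every prefix-free
machine `M` and some constant `c = c(M)`. -/
def Optimal (U : PrefixFreeMachine) : Prop :=
  ∀ W : PrefixFreeMachine, ∃ c : ℕ, ∀ σ : List Bool, Kof U σ ≤ Kof W σ + c

/-- A pruned tree is path-incompressible if `K(σ) ≥ |σ| - c` for all `σ ∈ T` and some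
constant `c` (stated additively to avoid truncated subtraction). -/
def PathIncompressible (U : PrefixFreeMachine) (T : Set (List Bool)) : Prop :=
  ∃ c : ℕ, ∀ σ ∈ T, (σ.length : ℕ∞) ≤ Kof U σ + c

/-- The class `𝒯_ℓ` of pruned trees containing the empty string in which every node of
length `ℓ n` has one or two extensions of length `ℓ (n+1)`. -/
def Tell (ℓ : ℕ → ℕ) (T : Set (List Bool)) : Prop :=
  IsTree T ∧ Pruned T ∧ [] ∈ T ∧
    ∀ n : ℕ, ∀ σ ∈ T, σ.length = ℓ n →
      1 ≤ {τ : List Bool | τ ∈ T ∧ σ <+: τ ∧ τ.length = ℓ (n + 1)}.ncard ∧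
        {τ : List Bool | τ ∈ T ∧ σ <+: τ ∧ τ.length = ℓ (n + 1)}.ncard ≤ 2

/-- The family `(H_σ)`: `Hfam ℓ m n σ` is `H_σ` for `σ` of length `m n`. We have
`H_λ = {λ}` and, writing `σ = σ₀ ∗ ρ` with `|σ₀| = m n`,
`H_{σ₀ ∗ ρ} = {τ' ∈ 2^{ℓ (n+1)} : ∃ τ ∈ H_{σ₀}, τ ∗ ρ ⪯ τ'}`. -/
def Hfam (ℓ m : ℕ → ℕ) : ℕ → List Bool → Set (List Bool)
  | 0, _ => {[]}
  | n + 1, σ =>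
      {τ' : List Bool | τ'.length = ℓ (n + 1) ∧
        ∃ τ ∈ Hfam ℓ m n (σ.take (m n)), (τ ++ σ.drop (m n)) <+: τ'}

/-- `Φ(T)`: the downward closure of `⋃_n {σ ∈ 2^{m n} : T ∩ H_σ ≠ ∅}`. -/
def Phi (ℓ m : ℕ → ℕ) (T : Set (List Bool)) : Set (List Bool) :=
  {η : List Bool | ∃ n : ℕ, ∃ σ : List Bool,
    σ.length = m n ∧ (T ∩ Hfam ℓ m n σ).Nonempty ∧ η <+: σ}

namespace S13

open List

/-! ### Primitive recursive `take` and `drop` -/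

private lemma filterMap_range_getElem? (l : List Bool) (n : ℕ) :
    (List.range n).filterMap (fun i => l[i]?) = l.take n := by
  induction n with
  | zero => simp
  | succ n ih =>
    rw [List.range_succ, List.filterMap_append, ih, List.take_succ]
    cases h : l[n]? <;> simp [h]

lemma primrec_take : Primrec₂ (fun (l : List Bool) (n : ℕ) => l.take n) := by
  have h : Primrec fun p : List Bool × ℕ => (List.range p.2).filterMap (fun i => p.1[i]?) :=
    Primrec.listFilterMap (Primrec.list_range.comp Primrec.snd)
      ((Primrec.list_getElem?.comp (Primrec.fst.comp Primrec.fst) Primrec.snd).to₂)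
  exact Primrec.to₂ (h.of_eq fun p => filterMap_range_getElem? p.1 p.2)

lemma primrec_drop : Primrec₂ (fun (l : List Bool) (n : ℕ) => l.drop n) := by
  have h : Primrec fun p : List Bool × ℕ =>
      ((p.1.reverse.take (p.1.length - p.2)).reverse) :=
    Primrec.list_reverse.comp
      (primrec_take.comp (Primrec.list_reverse.comp Primrec.fst)
        (Primrec.nat_sub.comp (Primrec.list_length.comp Primrec.fst) Primrec.snd))
  have h2 : Primrec fun p : List Bool × ℕ => p.1.drop p.2 :=
    h.of_eq fun p => by rw [← List.reverse_drop, List.reverse_reverse]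
  exact h2.to₂

/-! ### `kOf` -/

/-- `kAux m t j = max { k ≤ j | m k ≤ t }` (assuming `m 0 = 0`). -/
def kAux (m : ℕ → ℕ) (t : ℕ) (j : ℕ) : ℕ :=
  Nat.rec 0 (fun j ih => if m (j + 1) ≤ t then j + 1 else ih) j

/-- largest `k` with `m k ≤ t`. -/
def kOf (m : ℕ → ℕ) (t : ℕ) : ℕ := kAux m t (t + 1)

lemma kAux_le_self (m : ℕ → ℕ) (t : ℕ) : ∀ j, kAux m t j ≤ j := by
  intro j; induction j with
  | zero => simp [kAux]
  | succ j ih => simp only [kAux] at ih ⊢; split <;> omega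

lemma m_kAux_le (m : ℕ → ℕ) (hm0 : m 0 = 0) (t : ℕ) : ∀ j, m (kAux m t j) ≤ t := by
  intro j; induction j with
  | zero => simpa [kAux, hm0] using Nat.zero_le t
  | succ j ih => simp only [kAux] at ih ⊢; split <;> simpa [*]

lemma le_kAux (m : ℕ → ℕ) (t : ℕ) : ∀ j k, k ≤ j → m k ≤ t → k ≤ kAux m t j := by
  intro j; induction j with
  | zero => intro k hk _; omega
  | succ j ih =>
    intro k hk hmk
    rcases Nat.eq_or_lt_of_le hk with h | h
    · subst h; simp only [kAux]; rw [if_pos hmk]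
    · have := ih k (by omega) hmk
      simp only [kAux] at this ⊢
      split <;> [skip; exact this]
      have := kAux_le_self m t j
      simp only [kAux] at this
      omega

lemma m_kOf_le (m : ℕ → ℕ) (hm0 : m 0 = 0) (t : ℕ) : m (kOf m t) ≤ t :=
  m_kAux_le m hm0 t _

lemma lt_m_kOf_succ (m : ℕ → ℕ) (hm : StrictMono m) (hm0 : m 0 = 0) (t : ℕ) :
    t < m (kOf m t + 1) := by
  by_contra h
  push_neg at h
  have h1 : kOf m t + 1 ≤ m (kOf m t + 1) := hm.le_apply
  have h2 : kOf m t + 1 ≤ kAux m t (t + 1) := le_kAux m t (t + 1) _ (by omega) h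
  have : kAux m t (t + 1) = kOf m t := rfl
  omega

lemma kOf_eq (m : ℕ → ℕ) (hm : StrictMono m) (hm0 : m 0 = 0) {k t : ℕ}
    (h1 : m k ≤ t) (h2 : t < m (k + 1)) : kOf m t = k := by
  have ha := m_kOf_le m hm0 t
  have hb := lt_m_kOf_succ m hm hm0 t
  rcases lt_trichotomy (kOf m t) k with h | h | h
  · have : m (kOf m t + 1) ≤ m k := hm.monotone (by omega)
    omega
  · exact h
  · have : m (k + 1) ≤ m (kOf m t) := hm.monotone (by omega)
    omega

lemma kOf_computable {m : ℕ → ℕ} (hmc : Computable m) : Computable (kOf m) := by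
  have hc : Computable fun p : ℕ × (ℕ × ℕ) => decide (m (p.2.1 + 1) ≤ p.1) :=
    Primrec.nat_le.decide.to_comp.comp
      (hmc.comp (Computable.succ.comp (Computable.fst.comp Computable.snd)))
      Computable.fst
  have hh : Computable₂ fun (t : ℕ) (p : ℕ × ℕ) =>
      if m (p.1 + 1) ≤ t then p.1 + 1 else p.2 := by
    have : Computable fun p : ℕ × (ℕ × ℕ) =>
        bif decide (m (p.2.1 + 1) ≤ p.1) then p.2.1 + 1 else p.2.2 :=
      Computable.cond hc (Computable.succ.comp (Computable.fst.comp Computable.snd))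
        (Computable.snd.comp Computable.snd)
    exact this.of_eq fun p => by simp [Bool.cond_decide]
  exact (Computable.nat_rec (f := fun t : ℕ => t + 1) (g := fun _ => 0)
    (h := fun t p => if m (p.1 + 1) ≤ t then p.1 + 1 else p.2)
    Computable.succ (Computable.const 0) hh).of_eq fun t => rfl

end S13
namespace S13

/-! ### reconstruction function and the machine -/

variable (ℓ m : ℕ → ℕ)

/-- Rebuild the first `ℓ k` bits of a member of `H_{σ.take (m k)}` from `σ` and padding bits. -/
def buildF (σ pad : List Bool) (k : ℕ) : List Bool :=
  Nat.rec [] (fun j ih => ih ++ ((σ.take (m (j + 1))).drop (m j)) ++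
    ((pad.take (ℓ (j + 1) - m (j + 1))).drop (ℓ j - m j))) k

@[simp] lemma buildF_zero (σ pad : List Bool) : buildF ℓ m σ pad 0 = [] := rfl

lemma buildF_succ (σ pad : List Bool) (k : ℕ) :
    buildF ℓ m σ pad (k + 1) = buildF ℓ m σ pad k ++ ((σ.take (m (k + 1))).drop (m k)) ++
      ((pad.take (ℓ (k + 1) - m (k + 1))).drop (ℓ k - m k)) := rfl

/-- Number of padding bits needed for a string `σ`. -/
def padOf (σ : List Bool) : ℕ := ℓ (kOf m σ.length) - m (kOf m σ.length)

/-- The output of the machine on program `σ`, padding `pad`. -/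
def outF (σ pad : List Bool) : List Bool :=
  buildF ℓ m σ pad (kOf m σ.length) ++ σ.drop (m (kOf m σ.length))

variable {ℓ m}

lemma padOf_computable (hℓc : Computable ℓ) (hmc : Computable m) :
    Computable (padOf ℓ m) := by
  have hk : Computable fun σ : List Bool => kOf m σ.length :=
    (kOf_computable hmc).comp Primrec.list_length.to_comp
  exact Primrec.nat_sub.to_comp.comp (hℓc.comp hk) (hmc.comp hk)

lemma outF_computable (hℓc : Computable ℓ) (hmc : Computable m) : Computable₂ (outF ℓ m) := by
  have htake := primrec_take.to_comp
  have hdrop := primrec_drop.to_comp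
  have happ := (Primrec.list_append (α := Bool)).to_comp
  have hk : Computable fun p : List Bool × List Bool => kOf m p.1.length :=
    (kOf_computable hmc).comp (Primrec.list_length.to_comp.comp Computable.fst)
  have hb : Computable fun p : List Bool × List Bool => buildF ℓ m p.1 p.2 (kOf m p.1.length) := by
    have hh : Computable₂ fun (p : List Bool × List Bool) (q : ℕ × List Bool) =>
        q.2 ++ ((p.1.take (m (q.1 + 1))).drop (m q.1)) ++
          ((p.2.take (ℓ (q.1 + 1) - m (q.1 + 1))).drop (ℓ q.1 - m q.1)) := by
      have hj : Computable fun z : (List Bool × List Bool) × ℕ × List Bool => z.2.1 :=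
        Computable.fst.comp Computable.snd
      have hseg1 : Computable fun z : (List Bool × List Bool) × ℕ × List Bool =>
          (z.1.1.take (m (z.2.1 + 1))).drop (m z.2.1) :=
        hdrop.comp (htake.comp (Computable.fst.comp Computable.fst)
          (hmc.comp (Computable.succ.comp hj))) (hmc.comp hj)
      have hseg2 : Computable fun z : (List Bool × List Bool) × ℕ × List Bool =>
          (z.1.2.take (ℓ (z.2.1 + 1) - m (z.2.1 + 1))).drop (ℓ z.2.1 - m z.2.1) :=
        hdrop.comp (htake.comp (Computable.snd.comp Computable.fst)
          (Primrec.nat_sub.to_comp.comp (hℓc.comp (Computable.succ.comp hj))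
            (hmc.comp (Computable.succ.comp hj))))
          (Primrec.nat_sub.to_comp.comp (hℓc.comp hj) (hmc.comp hj))
      exact happ.comp (happ.comp (Computable.snd.comp Computable.snd) hseg1) hseg2
    exact (Computable.nat_rec hk (Computable.const ([] : List Bool)) hh).of_eq fun p => rfl
  have : Computable fun p : List Bool × List Bool =>
      buildF ℓ m p.1 p.2 (kOf m p.1.length) ++ p.1.drop (m (kOf m p.1.length)) :=
    happ.comp hb (hdrop.comp Computable.fst (hmc.comp hk))
  exact this

open Nat.Partrec (Code)
open Nat.Partrec.Code

variable (ℓ m) (cU : Code)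

/-- One dovetailing attempt: try to interpret `x.take i` as a `U`-program. -/
def tryF (x : List Bool) (s i : ℕ) : Option (List Bool) :=
  (evaln s cU (Encodable.encode (x.take i))).bind fun y =>
    (Encodable.decode (α := List Bool) y).bind fun σ =>
      if x.length = i + padOf ℓ m σ then some (outF ℓ m σ (x.drop i)) else none

/-- Stage-`s` approximation of the machine. -/
def gF (x : List Bool) (s : ℕ) : Option (List Bool) :=
  Nat.rec none (fun i ih => ih <|> tryF ℓ m cU x s i) (x.length + 1)

/-- The machine as a partial function. -/
def WMfun : List Bool →. List Bool := fun x => Nat.rfindOpt (gF ℓ m cU x)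

variable {ℓ m}

lemma tryF_computable (hℓc : Computable ℓ) (hmc : Computable m) : Computable fun q : (List Bool × ℕ) × ℕ => tryF ℓ m cU q.1.1 q.1.2 q.2 := by
  have htake := primrec_take.to_comp
  have hdrop := primrec_drop.to_comp
  have hx : Computable fun q : (List Bool × ℕ) × ℕ => q.1.1 := Computable.fst.comp Computable.fst
  have hs : Computable fun q : (List Bool × ℕ) × ℕ => q.1.2 := Computable.snd.comp Computable.fst
  have hi : Computable fun q : (List Bool × ℕ) × ℕ => q.2 := Computable.snd
  have he : Computable fun q : (List Bool × ℕ) × ℕ =>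
      evaln q.1.2 cU (Encodable.encode (q.1.1.take q.2)) :=
    primrec_evaln.to_comp.comp ((hs.pair (Computable.const cU)).pair
      (Computable.encode.comp (htake.comp hx hi)))
  refine Computable.option_bind he ?_
  refine Computable₂.mk ?_
  refine Computable.option_bind (Computable.decode.comp Computable.snd) ?_
  refine Computable₂.mk ?_
  -- a : (((List Bool × ℕ) × ℕ) × ℕ) × List Bool
  have hx' : Computable fun a : (((List Bool × ℕ) × ℕ) × ℕ) × List Bool => a.1.1.1.1 :=
    Computable.fst.comp (Computable.fst.comp (Computable.fst.comp Computable.fst))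
  have hi' : Computable fun a : (((List Bool × ℕ) × ℕ) × ℕ) × List Bool => a.1.1.2 :=
    Computable.snd.comp (Computable.fst.comp Computable.fst)
  have hσ : Computable fun a : (((List Bool × ℕ) × ℕ) × ℕ) × List Bool => a.2 := Computable.snd
  have hcond : Computable fun a : (((List Bool × ℕ) × ℕ) × ℕ) × List Bool =>
      decide (a.1.1.1.1.length = a.1.1.2 + padOf ℓ m a.2) :=
    (Primrec.eq (α := ℕ)).decide.to_comp.comp (Primrec.list_length.to_comp.comp hx')
      (Primrec.nat_add.to_comp.comp hi' ((padOf_computable hℓc hmc).comp hσ))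
  have hval : Computable fun a : (((List Bool × ℕ) × ℕ) × ℕ) × List Bool =>
      some (outF ℓ m a.2 (a.1.1.1.1.drop a.1.1.2)) :=
    Computable.option_some.comp ((outF_computable hℓc hmc).comp hσ (hdrop.comp hx' hi'))
  have := Computable.cond hcond hval (Computable.const (none : Option (List Bool)))
  exact this.of_eq fun a => by simp [Bool.cond_decide]

lemma gF_computable (hℓc : Computable ℓ) (hmc : Computable m) : Computable₂ (gF ℓ m cU) := by
  have horelse := (Primrec.option_orElse (α := List Bool)).to_comp
  have htc := tryF_computable cU hℓc hmc
  have hg : Computable fun a : (List Bool × ℕ) × (ℕ × Option (List Bool)) => (a.1, a.2.1) :=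
    Computable.fst.pair (Computable.fst.comp Computable.snd)
  have hG := htc.comp hg
  have hh0 := horelse.comp (Computable.snd.comp Computable.snd) hG
  have hh : Computable₂ fun (p : List Bool × ℕ) (q : ℕ × Option (List Bool)) =>
      q.2 <|> tryF ℓ m cU p.1 p.2 q.1 := Computable₂.mk (hh0.of_eq fun a => rfl)
  have hN := Computable.nat_rec (f := fun p : List Bool × ℕ => p.1.length + 1)
    (g := fun _ : List Bool × ℕ => (none : Option (List Bool)))
    (h := fun p q => q.2 <|> tryF ℓ m cU p.1 p.2 q.1)
    (Computable.succ.comp (Primrec.list_length.to_comp.comp Computable.fst))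
    (Computable.const none) hh
  exact Computable₂.mk (hN.of_eq fun p => rfl)

lemma WMfun_partrec (hℓc : Computable ℓ) (hmc : Computable m) : Partrec (WMfun ℓ m cU) :=
  Partrec.rfindOpt (gF_computable cU hℓc hmc)

end S13
namespace S13

open List

variable {ℓ m : ℕ → ℕ}

section comb

variable (hℓ : StrictMono ℓ) (hm : StrictMono m) (hℓ0 : ℓ 0 = 0) (hm0 : m 0 = 0)
    (hgap : ∀ n : ℕ, m (n + 1) - m n ≤ ℓ (n + 1) - ℓ n)

include hℓ hm hℓ0 hm0 hgap

lemma ml_le : ∀ j, m j ≤ ℓ j := by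
  intro j; induction j with
  | zero => omega
  | succ j ih =>
    have h1 := hgap j
    have h2 := hm.monotone (Nat.le_add_right j 1)
    have h3 := hℓ.monotone (Nat.le_add_right j 1)
    omega

lemma gap_le (n : ℕ) : ℓ n + (m (n + 1) - m n) ≤ ℓ (n + 1) := by
  have h1 := hgap n
  have h2 := hm.monotone (Nat.le_add_right n 1)
  have h3 := hℓ.monotone (Nat.le_add_right n 1)
  omega

lemma D_mono (j : ℕ) : ℓ j - m j ≤ ℓ (j + 1) - m (j + 1) := by
  have h1 := hgap j
  have h2 := hm.monotone (Nat.le_add_right j 1)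
  have h3 := hℓ.monotone (Nat.le_add_right j 1)
  have h4 := ml_le hℓ hm hℓ0 hm0 hgap j
  omega

omit hℓ hm hm0 hgap

lemma Hfam_length : ∀ n (σ τ : List Bool), τ ∈ Hfam ℓ m n σ → τ.length = ℓ n := by
  intro n σ τ h
  cases n with
  | zero => simp only [Hfam, Set.mem_singleton_iff] at h; subst h; simp [hℓ0]
  | succ n => exact h.1

include hm hm0 hgap omit hℓ0

lemma Hfam_peel {n : ℕ} {σ' τ' : List Bool} (hℓ0 : ℓ 0 = 0)
    (h : τ' ∈ Hfam ℓ m (n + 1) σ') :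
    τ'.length = ℓ (n + 1) ∧ τ'.take (ℓ n) ∈ Hfam ℓ m n (σ'.take (m n)) ∧
      (τ'.take (ℓ n)) ++ σ'.drop (m n) <+: τ' := by
  obtain ⟨hlen, τ, hτ, hpre⟩ := h
  have hτlen : τ.length = ℓ n := Hfam_length hℓ0 n _ τ hτ
  have hττ' : τ <+: τ' := (List.prefix_append τ _).trans hpre
  have hteq : τ = τ'.take (ℓ n) := by
    rw [List.prefix_iff_eq_take] at hττ'; rw [← hτlen]; exact hττ'
  refine ⟨hlen, ?_, ?_⟩
  · rw [← hteq]; exact hτ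
  · rw [← hteq]; exact hpre

end comb

section comb2

variable (hℓ : StrictMono ℓ) (hm : StrictMono m) (hℓ0 : ℓ 0 = 0) (hm0 : m 0 = 0)
    (hgap : ∀ n : ℕ, m (n + 1) - m n ≤ ℓ (n + 1) - ℓ n)

include hℓ hm hℓ0 hm0 hgap

/-- Extension step: any level-`n` witness extends to a level-`n+1` witness. -/
lemma Hfam_extend {T : Set (List Bool)} (hT : Tell ℓ T) {n : ℕ} {σ : List Bool}
    (hσ : σ.length = m n) (hne : (T ∩ Hfam ℓ m n σ).Nonempty) :
    ∃ ρ : List Bool, (σ ++ ρ).length = m (n + 1) ∧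
      (T ∩ Hfam ℓ m (n + 1) (σ ++ ρ)).Nonempty := by
  obtain ⟨τ, hτT, hτH⟩ := hne
  have hτlen : τ.length = ℓ n := Hfam_length hℓ0 n σ τ hτH
  obtain ⟨hcard, -⟩ := hT.2.2.2 n τ hτT hτlen
  have hne0 : {τ' : List Bool | τ' ∈ T ∧ τ <+: τ' ∧ τ'.length = ℓ (n + 1)}.ncard ≠ 0 := by
    omega
  obtain ⟨τ₂, hτ₂T, hτ₂pre, hτ₂len⟩ := Set.nonempty_of_ncard_ne_zero hne0
  have hgl := gap_le hℓ hm hℓ0 hm0 hgap n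
  set ρ := (τ₂.drop (ℓ n)).take (m (n + 1) - m n) with hρ
  have hρlen : ρ.length = m (n + 1) - m n := by
    simp only [hρ, List.length_take, List.length_drop, hτ₂len]
    omega
  have hmono := hm.monotone (Nat.le_add_right n 1)
  refine ⟨ρ, by simp [hσ, hρlen]; omega, ⟨τ₂, hτ₂T, ?_⟩⟩
  have htake : (σ ++ ρ).take (m n) = σ := by rw [← hσ]; exact List.take_left
  have hdrop : (σ ++ ρ).drop (m n) = ρ := by rw [← hσ]; exact List.drop_left
  refine ⟨hτ₂len, τ, ?_, ?_⟩
  · rw [htake]; exact hτH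
  · rw [hdrop]
    have hteq : τ = τ₂.take (ℓ n) := by
      rw [List.prefix_iff_eq_take] at hτ₂pre; rw [← hτlen]; exact hτ₂pre
    rw [hteq, hρ, ← List.take_add]
    exact List.take_prefix _ _

/-- Every level is inhabited. -/
lemma Phi_level {T : Set (List Bool)} (hT : Tell ℓ T) :
    ∀ n, ∃ σ : List Bool, σ.length = m n ∧ (T ∩ Hfam ℓ m n σ).Nonempty := by
  intro n; induction n with
  | zero =>
    exact ⟨[], by simp [hm0], ⟨[], hT.2.2.1, by simp [Hfam]⟩⟩
  | succ n ih =>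
    obtain ⟨σ, h1, h2⟩ := ih
    obtain ⟨ρ, h3, h4⟩ := Hfam_extend hℓ hm hℓ0 hm0 hgap hT h1 h2
    exact ⟨σ ++ ρ, h3, h4⟩

lemma buildF_congr {σ₁ σ₂ pad₁ pad₂ : List Bool} :
    ∀ k, σ₁.take (m k) = σ₂.take (m k) → pad₁.take (ℓ k - m k) = pad₂.take (ℓ k - m k) →
      buildF ℓ m σ₁ pad₁ k = buildF ℓ m σ₂ pad₂ k := by
  intro k
  induction k with
  | zero => intro _ _; rfl
  | succ k ih =>
    intro hσ hpad
    have hmono := hm.monotone (Nat.le_add_right k 1)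
    have hD := D_mono hℓ hm hℓ0 hm0 hgap k
    rw [buildF_succ, buildF_succ]
    have h1 : σ₁.take (m k) = σ₂.take (m k) := by
      have e1 : σ₁.take (m k) = (σ₁.take (m (k + 1))).take (m k) := by
        rw [List.take_take, min_eq_left hmono]
      have e2 : σ₂.take (m k) = (σ₂.take (m (k + 1))).take (m k) := by
        rw [List.take_take, min_eq_left hmono]
      rw [e1, e2, hσ]
    have h2 : pad₁.take (ℓ k - m k) = pad₂.take (ℓ k - m k) := by
      have e1 : pad₁.take (ℓ k - m k) = (pad₁.take (ℓ (k+1) - m (k+1))).take (ℓ k - m k) := by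
        rw [List.take_take, min_eq_left hD]
      have e2 : pad₂.take (ℓ k - m k) = (pad₂.take (ℓ (k+1) - m (k+1))).take (ℓ k - m k) := by
        rw [List.take_take, min_eq_left hD]
      rw [e1, e2, hpad]
    rw [ih h1 h2, hσ, hpad]

/-- Main reconstruction lemma. -/
lemma Hfam_build : ∀ n (σ' τ' : List Bool), σ'.length = m n → τ' ∈ Hfam ℓ m n σ' →
    ∀ k, k ≤ n → ∃ pad : List Bool, pad.length = ℓ k - m k ∧
      buildF ℓ m σ' pad k = τ'.take (ℓ k) := by
  intro n
  induction n with
  | zero =>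
    intro σ' τ' hσlen hτ k hk
    interval_cases k
    exact ⟨[], by simp [hℓ0, hm0], by simp [hℓ0]⟩
  | succ n ih =>
    intro σ' τ' hσlen hτ k hk
    obtain ⟨hτlen, hw, hwp⟩ := Hfam_peel hm hm0 hgap hℓ0 hτ
    have hmono := hm.monotone (Nat.le_add_right n 1)
    have hσtl : (σ'.take (m n)).length = m n := by
      rw [List.length_take]; omega
    rcases Nat.lt_succ_iff_lt_or_eq.1 (Nat.lt_succ_of_le hk) with h | h
    · -- k ≤ n
      have hk' : k ≤ n := by omega
      obtain ⟨pad, hpadlen, heq⟩ := ih (σ'.take (m n)) _ hσtl hw k hk'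
      refine ⟨pad, hpadlen, ?_⟩
      have hσc : σ'.take (m k) = (σ'.take (m n)).take (m k) := by
        rw [List.take_take, min_eq_left (hm.monotone hk')]
      have := buildF_congr hℓ hm hℓ0 hm0 hgap (pad₁ := pad) (pad₂ := pad) k hσc rfl
      rw [this, heq, List.take_take, min_eq_left (hℓ.monotone hk')]
    · -- k = n + 1
      subst h
      obtain ⟨pad₀, hlen₀, heq₀⟩ := ih (σ'.take (m n)) _ hσtl hw n le_rfl
      have hwlen : (τ'.take (ℓ n)).length = ℓ n := by
        rw [List.length_take, hτlen, min_eq_left (hℓ.monotone (Nat.le_add_right n 1))]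
      have heqw : buildF ℓ m (σ'.take (m n)) pad₀ n = τ'.take (ℓ n) := by
        rw [heq₀, List.take_take, min_self]
      have hgl := gap_le hℓ hm hℓ0 hm0 hgap n
      have hml := ml_le hℓ hm hℓ0 hm0 hgap n
      have hml' := ml_le hℓ hm hℓ0 hm0 hgap (n + 1)
      set A := ℓ n + (m (n + 1) - m n) with hA
      set extra := τ'.drop A with hextra
      have hexlen : extra.length = ℓ (n + 1) - A := by
        rw [hextra, List.length_drop, hτlen]
      refine ⟨pad₀ ++ extra, ?_, ?_⟩
      · rw [List.length_append, hlen₀, hexlen]; omega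
      · rw [buildF_succ]
        have e0 : buildF ℓ m σ' (pad₀ ++ extra) n = τ'.take (ℓ n) := by
          rw [← heqw]
          refine buildF_congr hℓ hm hℓ0 hm0 hgap n ?_ ?_
          · rw [List.take_take, min_self]
          · rw [← hlen₀, List.take_left, List.take_length]
        have e1 : σ'.take (m (n + 1)) = σ' := by rw [← hσlen, List.take_length]
        have e2 : (pad₀ ++ extra).take (ℓ (n + 1) - m (n + 1)) = pad₀ ++ extra := by
          have hlen2 : ℓ (n + 1) - m (n + 1) = (pad₀ ++ extra).length := by
            rw [List.length_append, hlen₀, hexlen]; omega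
          rw [hlen2, List.take_length]
        have e3 : (pad₀ ++ extra).drop (ℓ n - m n) = extra := by
          rw [← hlen₀, List.drop_left]
        rw [e0, e1, e2, e3]
        have hAl : (τ'.take (ℓ n) ++ σ'.drop (m n)).length = A := by
          rw [List.length_append, hwlen, List.length_drop, hσlen]
        have hpre2 : τ'.take (ℓ n) ++ σ'.drop (m n) = τ'.take A := by
          rw [List.prefix_iff_eq_take] at hwp
          rw [hwp, hAl]
        rw [List.append_assoc, ← List.append_assoc, hpre2, hextra,
          List.take_append_drop, ← hτlen, List.take_length]

/-- Prefix chain lemma. -/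
lemma Hfam_chain : ∀ n (σ' τ' : List Bool), σ'.length = m n → τ' ∈ Hfam ℓ m n σ' →
    ∀ j, j < n → (τ'.take (ℓ j)) ++ (σ'.take (m (j + 1))).drop (m j) <+: τ' := by
  intro n
  induction n with
  | zero => intro _ _ _ _ j hj; omega
  | succ n ih =>
    intro σ' τ' hσlen hτ j hj
    obtain ⟨hτlen, hw, hwp⟩ := Hfam_peel hm hm0 hgap hℓ0 hτ
    have hmono := hm.monotone (Nat.le_add_right n 1)
    rcases Nat.lt_succ_iff_lt_or_eq.1 hj with h | h
    · have hσtl : (σ'.take (m n)).length = m n := by rw [List.length_take]; omega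
      have := ih (σ'.take (m n)) _ hσtl hw j h
      have e1 : (τ'.take (ℓ n)).take (ℓ j) = τ'.take (ℓ j) := by
        rw [List.take_take, min_eq_left (hℓ.monotone (by omega))]
      have e2 : (σ'.take (m n)).take (m (j + 1)) = σ'.take (m (j + 1)) := by
        rw [List.take_take, min_eq_left (hm.monotone (by omega))]
      rw [e1, e2] at this
      exact this.trans (List.take_prefix _ _)
    · subst h
      have e1 : σ'.take (m (j + 1)) = σ' := by rw [← hσlen, List.take_length]
      rw [e1]
      exact hwp

end comb2

end S13
namespace S13

open List
open Nat.Partrec (Code)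
open Nat.Partrec.Code

variable {ℓ m : ℕ → ℕ}

/-! ### scan lemmas -/

private def scanF (F : ℕ → Option (List Bool)) (N : ℕ) : Option (List Bool) :=
  Nat.rec none (fun i ih => ih <|> F i) N

lemma gF_eq_scan (cU : Code) (x : List Bool) (s : ℕ) :
    gF ℓ m cU x s = scanF (tryF ℓ m cU x s) (x.length + 1) := rfl

lemma scanF_none {F : ℕ → Option (List Bool)} {N : ℕ} (h : ∀ i < N, F i = none) :
    scanF F N = none := by
  induction N with
  | zero => rfl
  | succ N ih =>
    show (scanF F N <|> F N) = none
    rw [ih (fun i hi => h i (by omega)), h N (by omega)]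
    rfl

lemma scanF_exists {F : ℕ → Option (List Bool)} {N : ℕ} {v : List Bool}
    (h : scanF F N = some v) : ∃ i < N, F i = some v := by
  induction N with
  | zero => exact absurd h (by simp [scanF])
  | succ N ih =>
    rw [show scanF F (N + 1) = (scanF F N <|> F N) from rfl] at h
    cases hN : scanF F N with
    | some w =>
      rw [hN, Option.orElse_eq_orElse, Option.orElse_eq_or, Option.some_or] at h
      obtain ⟨i, hi, hFi⟩ := ih (hN.trans (congrArg some (Option.some_inj.1 h)))
      exact ⟨i, by omega, hFi⟩
    | none =>
      rw [hN, Option.orElse_eq_orElse, Option.orElse_eq_or, Option.none_or] at h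
      exact ⟨N, by omega, h⟩

lemma scanF_eq_some {F : ℕ → Option (List Bool)} {N i₀ : ℕ} {v : List Bool}
    (hi : i₀ < N) (hv : F i₀ = some v) (hun : ∀ i < N, i ≠ i₀ → F i = none) :
    scanF F N = some v := by
  induction N with
  | zero => omega
  | succ N ih =>
    show (scanF F N <|> F N) = some v
    rcases Nat.lt_succ_iff_lt_or_eq.1 hi with h | h
    · rw [ih h (fun i h1 h2 => hun i (by omega) h2), Option.orElse_eq_orElse, Option.orElse_eq_or, Option.some_or]
    · subst h
      rw [scanF_none (fun i hi2 => hun i (by omega) (by omega)), Option.orElse_eq_orElse, Option.orElse_eq_or, Option.none_or, hv]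

/-! ### machine semantics -/

section sem

variable {U : PrefixFreeMachine} {cU : Code}

/-- The bridge hypothesis relating `cU` to `U`. -/
def EvalEq (U : PrefixFreeMachine) (cU : Code) : Prop :=
  ∀ l : List Bool, cU.eval (Encodable.encode l) = (U.M l).map Encodable.encode

variable (hev : EvalEq U cU)
include hev

lemma tryF_sound {x v : List Bool} {s i : ℕ} (h : tryF ℓ m cU x s i = some v) :
    ∃ σ, σ ∈ U.M (x.take i) ∧ x.length = i + padOf ℓ m σ ∧ v = outF ℓ m σ (x.drop i) := by
  unfold tryF at h
  rcases Option.bind_eq_some_iff.1 h with ⟨y, hy, h2⟩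
  rcases Option.bind_eq_some_iff.1 h2 with ⟨σ, hσ, h3⟩
  have hy' : y ∈ cU.eval (Encodable.encode (x.take i)) := evaln_sound (Option.mem_def.2 hy)
  rw [hev] at hy'
  rcases (Part.mem_map_iff _).1 hy' with ⟨σ₀, hσ₀, hyenc⟩
  have hσeq : σ = σ₀ := by
    rw [← hyenc, Encodable.encodek] at hσ
    exact (Option.some_inj.1 hσ).symm
  subst hσeq
  by_cases hc : x.length = i + padOf ℓ m σ
  · rw [if_pos hc] at h3
    exact ⟨σ, hσ₀, hc, (Option.some_inj.1 h3).symm⟩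
  · rw [if_neg hc] at h3; cases h3

omit hev

lemma tryF_mono {x v : List Bool} {s s' i : ℕ} (hss : s ≤ s')
    (h : tryF ℓ m cU x s i = some v) : tryF ℓ m cU x s' i = some v := by
  unfold tryF at h ⊢
  rcases Option.bind_eq_some_iff.1 h with ⟨y, hy, h2⟩
  have hy' := evaln_mono hss (Option.mem_def.2 hy)
  rw [Option.mem_def.1 hy']
  simpa using h2

include hev

lemma tryF_complete {σ p : List Bool} (hσ : σ ∈ U.M p) {x : List Bool} {i : ℕ}
    (hx : x.take i = p) (hlen : x.length = i + padOf ℓ m σ) :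
    ∃ s, tryF ℓ m cU x s i = some (outF ℓ m σ (x.drop i)) := by
  have hy : Encodable.encode σ ∈ cU.eval (Encodable.encode p) := by
    rw [hev]
    exact (Part.mem_map_iff _).2 ⟨σ, hσ, rfl⟩
  rcases evaln_complete.1 hy with ⟨s, hs⟩
  refine ⟨s, ?_⟩
  unfold tryF
  rw [hx, Option.mem_def.1 hs]
  simp [Encodable.encodek, hlen]

lemma tryF_unique (hpf : PrefixFreeSet U.M.Dom) {x v v' : List Bool} {s s' i i' : ℕ}
    (hi : i ≤ x.length) (hi' : i' ≤ x.length)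
    (h : tryF ℓ m cU x s i = some v) (h' : tryF ℓ m cU x s' i' = some v') : i = i' := by
  obtain ⟨σ, hσ, -, -⟩ := tryF_sound hev h
  obtain ⟨σ', hσ', -, -⟩ := tryF_sound hev h'
  have d1 : x.take i ∈ U.M.Dom := (PFun.mem_dom _ _).2 ⟨σ, hσ⟩
  have d2 : x.take i' ∈ U.M.Dom := (PFun.mem_dom _ _).2 ⟨σ', hσ'⟩
  have hlen1 : (x.take i).length = i := by rw [List.length_take]; omega
  have hlen2 : (x.take i').length = i' := by rw [List.length_take]; omega
  rcases List.prefix_or_prefix_of_prefix (List.take_prefix i x) (List.take_prefix i' x)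
    with hp | hp
  · have := hpf _ d1 _ d2 hp
    rw [← hlen1, ← hlen2, this]
  · have := hpf _ d2 _ d1 hp
    rw [← hlen1, ← hlen2, this]

lemma gF_sound {x v : List Bool} {s : ℕ} (h : gF ℓ m cU x s = some v) :
    ∃ i ≤ x.length, tryF ℓ m cU x s i = some v := by
  rw [gF_eq_scan] at h
  obtain ⟨i, hi, hFi⟩ := scanF_exists h
  exact ⟨i, by omega, hFi⟩

lemma gF_complete (hpf : PrefixFreeSet U.M.Dom) {x v : List Bool} {s i : ℕ}
    (hi : i ≤ x.length) (h : tryF ℓ m cU x s i = some v) : gF ℓ m cU x s = some v := by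
  rw [gF_eq_scan]
  refine scanF_eq_some (by omega) h fun j hj hne => ?_
  cases htry : tryF ℓ m cU x s j with
  | none => rfl
  | some w => exact absurd (tryF_unique hev hpf (by omega) hi htry h) hne

lemma gF_mono (hpf : PrefixFreeSet U.M.Dom) {x v : List Bool} {s s' : ℕ} (hss : s ≤ s')
    (h : gF ℓ m cU x s = some v) : gF ℓ m cU x s' = some v := by
  obtain ⟨i, hi, hFi⟩ := gF_sound hev h
  exact gF_complete hev hpf hi (tryF_mono hss hFi)

lemma WM_mem (hpf : PrefixFreeSet U.M.Dom) {x v : List Bool} :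
    v ∈ WMfun ℓ m cU x ↔ ∃ s, gF ℓ m cU x s = some v := by
  unfold WMfun
  exact Nat.rfindOpt_mono fun {a s s'} hss ha => gF_mono hev hpf hss ha

lemma WM_val (hpf : PrefixFreeSet U.M.Dom) {σ p pad : List Bool} (hσ : σ ∈ U.M p)
    (hpad : pad.length = padOf ℓ m σ) :
    outF ℓ m σ pad ∈ WMfun ℓ m cU (p ++ pad) := by
  have h1 : (p ++ pad).take p.length = p := List.take_left
  have h2 : (p ++ pad).drop p.length = pad := List.drop_left
  have hlen : (p ++ pad).length = p.length + padOf ℓ m σ := by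
    rw [List.length_append, hpad]
  obtain ⟨s, hs⟩ := tryF_complete hev hσ h1 hlen
  rw [h2] at hs
  rw [WM_mem hev hpf]
  exact ⟨s, gF_complete hev hpf (by rw [List.length_append]; omega) hs⟩

lemma WM_dom {x : List Bool} (hx : x ∈ (WMfun ℓ m cU).Dom) :
    ∃ i ≤ x.length, ∃ σ, σ ∈ U.M (x.take i) ∧ x.length = i + padOf ℓ m σ := by
  obtain ⟨v, hv⟩ := (PFun.mem_dom _ _).1 hx
  have hpf := U.prefixFree
  rw [WM_mem hev hpf] at hv
  obtain ⟨s, hs⟩ := hv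
  obtain ⟨i, hi, hFi⟩ := gF_sound hev hs
  obtain ⟨σ, hσ, hlen, -⟩ := tryF_sound hev hFi
  exact ⟨i, hi, σ, hσ, hlen⟩

lemma WM_prefixFree : PrefixFreeSet (WMfun ℓ m cU).Dom := by
  intro x hx x' hx' hpre
  obtain ⟨i, hi, σ, hσ, hlen⟩ := WM_dom hev hx
  obtain ⟨i', hi', σ', hσ', hlen'⟩ := WM_dom hev hx'
  have d1 : x.take i ∈ U.M.Dom := (PFun.mem_dom _ _).2 ⟨σ, hσ⟩
  have d2 : x'.take i' ∈ U.M.Dom := (PFun.mem_dom _ _).2 ⟨σ', hσ'⟩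
  have hp1 : x.take i <+: x' := (List.take_prefix i x).trans hpre
  have hteq : x.take i = x'.take i' := by
    rcases List.prefix_or_prefix_of_prefix hp1 (List.take_prefix i' x') with hp | hp
    · exact U.prefixFree _ d1 _ d2 hp
    · exact (U.prefixFree _ d2 _ d1 hp).symm
  have hσσ' : σ = σ' := Part.mem_unique hσ (hteq ▸ hσ')
  have hii' : i = i' := by
    have e1 : (x.take i).length = i := by rw [List.length_take]; omega
    have e2 : (x'.take i').length = i' := by rw [List.length_take]; omega
    rw [← e1, ← e2, hteq]
  exact hpre.eq_of_length (by rw [hlen, hlen', hσσ', hii'])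

end sem

end S13
namespace S13

open List

variable {ℓ m : ℕ → ℕ}

/-- Transfer lemma: every `σ ∈ Φ(T)` is, together with suitable padding bits,
a description of a member of `T` of length `ℓ k + (|σ| - m k)`. -/
lemma transfer (hℓ : StrictMono ℓ) (hm : StrictMono m) (hℓ0 : ℓ 0 = 0) (hm0 : m 0 = 0)
    (hgap : ∀ n : ℕ, m (n + 1) - m n ≤ ℓ (n + 1) - ℓ n)
    {T : Set (List Bool)} (hT : Tell ℓ T) {σ : List Bool} (hσPhi : σ ∈ Phi ℓ m T) :
    ∃ τ ∈ T, ∃ pad : List Bool, pad.length = padOf ℓ m σ ∧ outF ℓ m σ pad = τ ∧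
      τ.length + m (kOf m σ.length) = ℓ (kOf m σ.length) + σ.length ∧
      m (kOf m σ.length) ≤ σ.length ∧ m (kOf m σ.length) ≤ ℓ (kOf m σ.length) := by
  obtain ⟨n, σ', hσ'len, ⟨τ', hτ'T, hτ'H⟩, hpre⟩ := hσPhi
  have hk1 : m (kOf m σ.length) ≤ σ.length := m_kOf_le m hm0 _
  have hk2 : σ.length < m (kOf m σ.length + 1) := lt_m_kOf_succ m hm hm0 _
  have hσle : σ.length ≤ m n := by
    have := hpre.length_le; omega
  have hkn : kOf m σ.length ≤ n := by
    have h1 : m (kOf m σ.length) ≤ m n := le_trans hk1 hσle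
    exact hm.le_iff_le.1 h1
  set k := kOf m σ.length with hkdef
  obtain ⟨pad, hpadlen, hbuild⟩ := Hfam_build hℓ hm hℓ0 hm0 hgap n σ' τ' hσ'len hτ'H k hkn
  have hτ'len : τ'.length = ℓ n := Hfam_length hℓ0 n σ' τ' hτ'H
  have hσtake : σ = σ'.take σ.length := List.prefix_iff_eq_take.1 hpre
  have hσc : σ.take (m k) = σ'.take (m k) := by
    conv_lhs => rw [hσtake]
    rw [List.take_take, min_eq_left hk1]
  have hbuild2 : buildF ℓ m σ pad k = τ'.take (ℓ k) := by
    rw [buildF_congr hℓ hm hℓ0 hm0 hgap (pad₁ := pad) (pad₂ := pad) k hσc rfl, hbuild]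
  have hout : outF ℓ m σ pad = τ'.take (ℓ k) ++ σ.drop (m k) := by
    unfold outF
    rw [← hkdef, hbuild2]
  have hpre2 : outF ℓ m σ pad <+: τ' := by
    rcases eq_or_lt_of_le hkn with hkeq | hklt
    · -- k = n
      have hσfull : σ.length = m n := le_antisymm hσle (by rw [← hkeq]; exact hk1)
      have hdropnil : σ.drop (m k) = [] := by
        rw [hkeq, ← hσfull, List.drop_length]
      rw [hout, hdropnil, List.append_nil]
      exact List.take_prefix _ _
    · -- k < n
      have chain := Hfam_chain hℓ hm hℓ0 hm0 hgap n σ' τ' hσ'len hτ'H k hklt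
      have hσlt : σ.length ≤ m (k + 1) := le_of_lt hk2
      have hσeq2 : σ = (σ'.take (m (k + 1))).take σ.length := by
        rw [List.take_take, min_eq_left hσlt, ← hσtake]
      have hd : σ.drop (m k) <+: (σ'.take (m (k + 1))).drop (m k) := by
        conv_lhs => rw [hσeq2]
        exact (List.take_prefix _ _).drop (m k)
      obtain ⟨t, ht⟩ := hd
      have happ : τ'.take (ℓ k) ++ σ.drop (m k) <+:
          τ'.take (ℓ k) ++ (σ'.take (m (k + 1))).drop (m k) :=
        ⟨t, by rw [List.append_assoc, ht]⟩
      rw [hout]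
      exact happ.trans chain
  refine ⟨outF ℓ m σ pad, hT.1 τ' hτ'T _ hpre2, pad, hpadlen, rfl, ?_, hk1,
    ml_le hℓ hm hℓ0 hm0 hgap k⟩
  rw [hout, List.length_append, List.length_take, List.length_drop, hτ'len,
    min_eq_left (hℓ.monotone hkn)]
  omega

end S13
/-- For every `T ∈ 𝒯_ℓ`, `Φ(T)` is an infinite pruned tree; moreover
there is a constant `d`, independent of `T` and `c`, such that whenever
`K(σ) ≥ |σ| - c` on `T`, we get `K(σ) ≥ |σ| - c - d` on `Φ(T)`. In particular `Φ`
preserves path-incompressibility. -/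
theorem stmt_13 (U : PrefixFreeMachine) (hU : Optimal U)
    (ℓ m : ℕ → ℕ) (hℓc : Computable ℓ) (hmc : Computable m)
    (hℓ : StrictMono ℓ) (hm : StrictMono m) (hℓ0 : ℓ 0 = 0) (hm0 : m 0 = 0)
    (hgap : ∀ n : ℕ, m (n + 1) - m n ≤ ℓ (n + 1) - ℓ n) :
    (∀ T : Set (List Bool), Tell ℓ T →
        (Phi ℓ m T).Infinite ∧ IsTree (Phi ℓ m T) ∧ Pruned (Phi ℓ m T)) ∧
      (∃ d : ℕ, ∀ T : Set (List Bool), Tell ℓ T → ∀ c : ℕ,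
        (∀ σ ∈ T, (σ.length : ℕ∞) ≤ Kof U σ + c) →
          ∀ σ ∈ Phi ℓ m T, (σ.length : ℕ∞) ≤ Kof U σ + c + d) ∧
      ∀ T : Set (List Bool), Tell ℓ T → PathIncompressible U T →
        PathIncompressible U (Phi ℓ m T) := by
  constructor
  · -- Part 1: infinite pruned tree
    intro T hT
    refine ⟨?_, ?_, ?_⟩
    · -- infinite
      have h := S13.Phi_level hℓ hm hℓ0 hm0 hgap hT
      choose f hf1 hf2 using h
      refine Set.infinite_of_injective_forall_mem (f := f) ?_ ?_
      · intro a b hab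
        have : m a = m b := by rw [← hf1 a, ← hf1 b, hab]
        exact hm.injective this
      · intro n
        exact ⟨n, f n, hf1 n, hf2 n, List.prefix_refl _⟩
    · -- tree
      intro σ hσ τ hτ
      obtain ⟨n, σ', h1, h2, h3⟩ := hσ
      exact ⟨n, σ', h1, h2, hτ.trans h3⟩
    · -- pruned
      intro η hη
      obtain ⟨n, σ', h1, h2, h3⟩ := hη
      obtain ⟨ρ, h4, h5⟩ := S13.Hfam_extend hℓ hm hℓ0 hm0 hgap hT h1 h2
      refine ⟨σ' ++ ρ, ⟨n + 1, σ' ++ ρ, h4, h5, List.prefix_refl _⟩,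
        h3.trans (List.prefix_append _ _), ?_⟩
      intro heq
      have l1 : η.length ≤ σ'.length := h3.length_le
      rw [heq, List.length_append] at l1
      rw [List.length_append] at h4
      have hmm : m n < m (n + 1) := hm (by omega)
      omega
  · -- Parts 2 and 3
    obtain ⟨cU, hcU⟩ := Nat.Partrec.Code.exists_code.1 U.partrec
    have hev : S13.EvalEq U cU := by
      intro l
      rw [hcU]
      simp [Encodable.encodek]
    let W : PrefixFreeMachine :=
      ⟨S13.WMfun ℓ m cU, S13.WMfun_partrec cU hℓc hmc, S13.WM_prefixFree hev⟩
    obtain ⟨d, hd⟩ := hU W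
    have main : ∀ T : Set (List Bool), Tell ℓ T → ∀ c : ℕ,
        (∀ σ ∈ T, (σ.length : ℕ∞) ≤ Kof U σ + c) →
          ∀ σ ∈ Phi ℓ m T, (σ.length : ℕ∞) ≤ Kof U σ + c + d := by
      intro T hT c hc σ hσPhi
      by_cases htop : Kof U σ = ⊤
      · rw [htop]
        exact le_top.trans (le_of_eq (by simp))
      · obtain ⟨a, ha⟩ : ∃ a : ℕ, Kof U σ = (a : ℕ∞) := by
          lift Kof U σ to ℕ using htop with a ha
          exact ⟨a, rfl⟩
        have h1 : Kof U σ < (a : ℕ∞) + 1 := by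
          rw [ha]
          exact_mod_cast Nat.lt_succ_self a
        rw [Kof] at h1
        obtain ⟨p, hp1⟩ := iInf_lt_iff.1 h1
        obtain ⟨hpmem, hp2⟩ := iInf_lt_iff.1 hp1
        have hplen : p.length ≤ a := by
          have : (p.length : ℕ∞) < ((a + 1 : ℕ) : ℕ∞) := by push_cast; exact hp2
          exact_mod_cast Nat.lt_succ_iff.1 (by exact_mod_cast this)
        obtain ⟨τ, hτT, pad, hpadlen, hout, hlen1, hlen2, hlen3⟩ :=
          S13.transfer hℓ hm hℓ0 hm0 hgap hT hσPhi
        have hWτ : τ ∈ W.M (p ++ pad) := by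
          have := S13.WM_val (ℓ := ℓ) (m := m) hev U.prefixFree hpmem hpadlen
          rw [hout] at this
          exact this
        have hKW : Kof W τ ≤ ((p ++ pad).length : ℕ∞) := by
          rw [Kof]; exact iInf₂_le (f := fun ρ (_ : τ ∈ W.M ρ) => (ρ.length : ℕ∞)) (p ++ pad) hWτ
        have hchain : (τ.length : ℕ∞) ≤ ((p.length + S13.padOf ℓ m σ + d + c : ℕ) : ℕ∞) := by
          calc (τ.length : ℕ∞) ≤ Kof U τ + c := hc τ hτT
            _ ≤ (Kof W τ + d) + c := add_le_add_left (hd τ) _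
            _ ≤ (((p ++ pad).length : ℕ∞) + d) + c := by
                exact add_le_add_left (add_le_add_left hKW _) _
            _ = ((p.length + S13.padOf ℓ m σ + d + c : ℕ) : ℕ∞) := by
                rw [List.length_append, hpadlen]
                push_cast
                ring
        have hN : τ.length ≤ p.length + S13.padOf ℓ m σ + d + c := by exact_mod_cast hchain
        have hpad_eq : S13.padOf ℓ m σ =
            ℓ (S13.kOf m σ.length) - m (S13.kOf m σ.length) := rfl
        have goalN : σ.length ≤ a + c + d := by omega
        rw [ha]
        exact_mod_cast goalN
    refine ⟨⟨d, main⟩, ?_⟩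
    intro T hT hPI
    obtain ⟨c, hc⟩ := hPI
    refine ⟨c + d, fun σ hσ => ?_⟩
    calc (σ.length : ℕ∞) ≤ Kof U σ + c + d := main T hT c hc σ hσ
      _ = Kof U σ + ((c + d : ℕ) : ℕ∞) := by push_cast; ring
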